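/- Let a and a′ be directed paths in the square annulus X, both passing below the obstruction, and both normalized so that {t ∈ [0,1] : a₁(t) ∈ (1/3,2/3)} = (1/3, 2/3) and {t ∈ [0,1] : a′₁(t) ∈ (1/3,2/3)} = (1/3, 2/3). Then the affine interpolation H(t,s) = (1−s)·a(t) + s·a′(t) avoids Q, i.e. H(t,s) ∉ Q for all (t,s) ∈ [0,1]²; consequently H is a homotopy with fixed endpoints from a to a′ such that every intermediate path H(−,s) is a directed path in X. (The affine-interpolation step in the proof of 2.1.) -/

import Mathlib

open Set

/-- The obstruction: the open square `(1/3, 2/3) × (1/3, 2/3)`. -/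
def Qobs : Set (ℝ × ℝ) := Ioo (1/3 : ℝ) (2/3) ×ˢ Ioo (1/3 : ℝ) (2/3)

/-- A directed path in `[0,1]²` avoiding `Q`, with nondecreasing coordinates,
from `(0,0)` to `(1,1)`. -/
def DiPath (Q : Set (ℝ × ℝ)) (a : ℝ → ℝ × ℝ) : Prop :=
  ContinuousOn a (Icc 0 1) ∧
  (∀ t ∈ Icc (0:ℝ) 1, a t ∈ Icc (0:ℝ) 1 ×ˢ Icc (0:ℝ) 1) ∧
  (∀ t ∈ Icc (0:ℝ) 1, a t ∉ Q) ∧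
  MonotoneOn (fun t => (a t).1) (Icc 0 1) ∧
  MonotoneOn (fun t => (a t).2) (Icc 0 1) ∧
  a 0 = (0, 0) ∧ a 1 = (1, 1)

/-- `a` passes below the obstruction. -/
def Below (a : ℝ → ℝ × ℝ) : Prop :=
  ∀ t ∈ Icc (0:ℝ) 1, (a t).1 ∈ Ioo (1/3 : ℝ) (2/3) → (a t).2 ≤ 1/3

lemma left_bound (a : ℝ → ℝ × ℝ) (ha : DiPath Qobs a)
    (hnorm : {t ∈ Icc (0:ℝ) 1 | (a t).1 ∈ Ioo (1/3 : ℝ) (2/3)} = Ioo (1/3 : ℝ) (2/3))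
    (t : ℝ) (ht : t ∈ Icc (0:ℝ) 1) (hle : t ≤ 1/3) : (a t).1 ≤ 1/3 := by
  by_contra h
  push_neg at h
  by_cases h2 : (a t).1 < 2/3
  · have hmem : t ∈ Ioo (1/3:ℝ) (2/3) := by
      rw [← hnorm]; exact ⟨ht, h, h2⟩
    linarith [hmem.1]
  · push_neg at h2
    have hcont : ContinuousOn (fun u => (a u).1) (Icc 0 t) :=
      (ha.1.mono (Icc_subset_Icc le_rfl ht.2)).fst
    have h0 : (a 0).1 = 0 := by rw [ha.2.2.2.2.2.1]
    have hiv : (1/2:ℝ) ∈ Icc ((a 0).1) ((a t).1) := by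
      rw [h0]; constructor <;> linarith
    obtain ⟨t₀, ht₀, heq⟩ := intermediate_value_Icc ht.1 hcont hiv
    have hmem : t₀ ∈ Ioo (1/3:ℝ) (2/3) := by
      rw [← hnorm]
      refine ⟨⟨ht₀.1, ht₀.2.trans ht.2⟩, ?_⟩
      simp only [] at heq
      rw [show (a t₀).1 = 1/2 from heq]; constructor <;> norm_num
    linarith [hmem.1, ht₀.2]

lemma right_bound (a : ℝ → ℝ × ℝ) (ha : DiPath Qobs a)
    (hnorm : {t ∈ Icc (0:ℝ) 1 | (a t).1 ∈ Ioo (1/3 : ℝ) (2/3)} = Ioo (1/3 : ℝ) (2/3))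
    (t : ℝ) (ht : t ∈ Icc (0:ℝ) 1) (hle : 2/3 ≤ t) : 2/3 ≤ (a t).1 := by
  by_contra h
  push_neg at h
  by_cases h2 : 1/3 < (a t).1
  · have hmem : t ∈ Ioo (1/3:ℝ) (2/3) := by
      rw [← hnorm]; exact ⟨ht, h2, h⟩
    linarith [hmem.2]
  · push_neg at h2
    have hcont : ContinuousOn (fun u => (a u).1) (Icc t 1) :=
      (ha.1.mono (Icc_subset_Icc ht.1 le_rfl)).fst
    have h1 : (a 1).1 = 1 := by rw [ha.2.2.2.2.2.2]
    have hiv : (1/2:ℝ) ∈ Icc ((a t).1) ((a 1).1) := by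
      rw [h1]; constructor <;> linarith
    obtain ⟨t₀, ht₀, heq⟩ := intermediate_value_Icc ht.2 hcont hiv
    have hmem : t₀ ∈ Ioo (1/3:ℝ) (2/3) := by
      rw [← hnorm]
      refine ⟨⟨ht.1.trans ht₀.1, ht₀.2⟩, ?_⟩
      simp only [] at heq
      rw [show (a t₀).1 = 1/2 from heq]; constructor <;> norm_num
    linarith [hmem.2, ht₀.1]

lemma mid_bound (a : ℝ → ℝ × ℝ) (hb : Below a)
    (hnorm : {t ∈ Icc (0:ℝ) 1 | (a t).1 ∈ Ioo (1/3 : ℝ) (2/3)} = Ioo (1/3 : ℝ) (2/3))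
    (t : ℝ) (ht : t ∈ Ioo (1/3:ℝ) (2/3)) : (a t).2 ≤ 1/3 := by
  rw [← hnorm] at ht
  exact hb t ht.1 ht.2

/-- For two normalized directed paths in the square annulus, both passing below the
obstruction, the affine interpolation `H (t, s) = (1-s) • a t + s • a' t` avoids `Q`;
consequently it is a homotopy with fixed endpoints from `a` to `a'` all of whose
intermediate paths are directed paths in the annulus.
(The affine-interpolation step in the proof of 2.1.) -/
theorem affine_interpolation_avoids_obstruction (a a' : ℝ → ℝ × ℝ)
    (ha : DiPath Qobs a) (ha' : DiPath Qobs a')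
    (hb : Below a) (hb' : Below a')
    (hnorm : {t ∈ Icc (0:ℝ) 1 | (a t).1 ∈ Ioo (1/3 : ℝ) (2/3)} = Ioo (1/3 : ℝ) (2/3))
    (hnorm' : {t ∈ Icc (0:ℝ) 1 | (a' t).1 ∈ Ioo (1/3 : ℝ) (2/3)} = Ioo (1/3 : ℝ) (2/3)) :
    (∀ t ∈ Icc (0:ℝ) 1, ∀ s ∈ Icc (0:ℝ) 1, (1 - s) • a t + s • a' t ∉ Qobs) ∧
    (∀ s ∈ Icc (0:ℝ) 1, DiPath Qobs (fun t => (1 - s) • a t + s • a' t)) := by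
  have key : ∀ t ∈ Icc (0:ℝ) 1, ∀ s ∈ Icc (0:ℝ) 1, (1 - s) • a t + s • a' t ∉ Qobs := by
    intro t ht s hs hmem
    have hfst : ((1 - s) • a t + s • a' t).1 = (1 - s) * (a t).1 + s * (a' t).1 := rfl
    have hsnd : ((1 - s) • a t + s • a' t).2 = (1 - s) * (a t).2 + s * (a' t).2 := rfl
    obtain ⟨hm1, hm2⟩ := hmem
    rw [hfst] at hm1
    rw [hsnd] at hm2
    have hs0 : (0:ℝ) ≤ s := hs.1
    have hs1 : s ≤ 1 := hs.2
    rcases le_or_gt t (1/3) with hT | hT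
    · have b1 := left_bound a ha hnorm t ht hT
      have b2 := left_bound a' ha' hnorm' t ht hT
      nlinarith [hm1.1]
    · rcases lt_or_ge t (2/3) with hT2 | hT2
      · have b1 := mid_bound a hb hnorm t ⟨hT, hT2⟩
        have b2 := mid_bound a' hb' hnorm' t ⟨hT, hT2⟩
        nlinarith [hm2.1]
      · have b1 := right_bound a ha hnorm t ht hT2
        have b2 := right_bound a' ha' hnorm' t ht hT2
        nlinarith [hm1.2]
  refine ⟨key, fun s hs => ?_⟩
  have hs0 : (0:ℝ) ≤ s := hs.1
  have hs1 : s ≤ 1 := hs.2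
  refine ⟨?_, ?_, fun t ht => key t ht s hs, ?_, ?_, ?_, ?_⟩
  · exact (ha.1.const_smul (1 - s)).add (ha'.1.const_smul s)
  · intro t ht
    obtain ⟨⟨x1, x2⟩, ⟨y1, y2⟩⟩ := ha.2.1 t ht
    obtain ⟨⟨x1', x2'⟩, ⟨y1', y2'⟩⟩ := ha'.2.1 t ht
    refine ⟨⟨?_, ?_⟩, ?_, ?_⟩
    · show (0:ℝ) ≤ (1-s) * (a t).1 + s * (a' t).1; nlinarith
    · show (1-s) * (a t).1 + s * (a' t).1 ≤ 1; nlinarith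
    · show (0:ℝ) ≤ (1-s) * (a t).2 + s * (a' t).2; nlinarith
    · show (1-s) * (a t).2 + s * (a' t).2 ≤ 1; nlinarith
  · intro u hu v hv huv
    have h1 := ha.2.2.2.1 hu hv huv
    have h2 := ha'.2.2.2.1 hu hv huv
    simp only at h1 h2 ⊢
    show (1-s) * (a u).1 + s * (a' u).1 ≤ (1-s) * (a v).1 + s * (a' v).1
    nlinarith
  · intro u hu v hv huv
    have h1 := ha.2.2.2.2.1 hu hv huv
    have h2 := ha'.2.2.2.2.1 hu hv huv
    simp only at h1 h2 ⊢
    show (1-s) * (a u).2 + s * (a' u).2 ≤ (1-s) * (a v).2 + s * (a' v).2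
    nlinarith
  · show (1 - s) • a 0 + s • a' 0 = (0, 0)
    rw [ha.2.2.2.2.2.1, ha'.2.2.2.2.2.1]
    ext <;> simp
  · show (1 - s) • a 1 + s • a' 1 = (1, 1)
    rw [ha.2.2.2.2.2.2, ha'.2.2.2.2.2.2]
    ext <;> simp
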